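/- Fix a pair of test channels (P*_{X̂₁|XY}, P*_{X̂₂|XYX̂₁}) achieving R_K(P_{XY},D₁,D₂), with induced marginals P*_{X̂₁} and P*_{X̂₂|YX̂₁}, and write α₂(x,y,x̂₁) := α₂(x,y,x̂₁|P*_{X̂₂|YX̂₁}) and α(x,y) := α(x,y|P*_{X̂₁},P*_{X̂₂|YX̂₁}). Define ν₁(x̂₁) := E_{P_{XY}}[ (α(X,Y)/α₂(X,Y,x̂₁)) exp(−λ₁* d₁(X,x̂₁)) ] and, for any conditional pmf Q_{X̂₂|YX̂₁}, ν₂(x̂₁, Q_{X̂₂|YX̂₁}) := Σ_{x,y,x̂₂} P_{XY}(x,y) Q_{X̂₂|YX̂₁}(x̂₂|y,x̂₁) α(x,y) exp(−λ₁* d₁(x,x̂₁) − λ₂* d₂(x,x̂₂)). Then for every x̂₁ ∈ 𝒳̂₁ and every conditional pmf Q_{X̂₂|YX̂₁}: ν₁(x̂₁) ≤ 1 and ν₂(x̂₁, Q_{X̂₂|YX̂₁}) ≤ 1. -/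

import Mathlib

set_option linter.unusedSectionVars false
set_option linter.unusedVariables false


open scoped BigOperators Classical
open Finset

namespace Kaspi

/-- A probability mass function on a finite type. -/
def IsPMF {α : Type*} [Fintype α] (p : α → ℝ) : Prop :=
  (∀ a, 0 ≤ p a) ∧ ∑ a, p a = 1

variable {X Y X1 X2 : Type*} [Fintype X] [Fintype Y] [Fintype X1] [Fintype X2]

/-- A joint probability mass function on `X × Y` (curried). -/
def IsPMF2 (P : X → Y → ℝ) : Prop :=
  (∀ x y, 0 ≤ P x y) ∧ ∑ x, ∑ y, P x y = 1

/-- A test channel `P_{X̂₁|XY}`. -/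
def IsChan1 (W : X → Y → X1 → ℝ) : Prop := ∀ x y, IsPMF (W x y)

/-- A test channel `P_{X̂₂|XYX̂₁}`. -/
def IsChan2 (W : X → Y → X1 → X2 → ℝ) : Prop := ∀ x y a, IsPMF (W x y a)

/-- Induced reproduction marginal `P_{X̂₁}`. -/
noncomputable def pA (P : X → Y → ℝ) (W1 : X → Y → X1 → ℝ) (a : X1) : ℝ :=
  ∑ x, ∑ y, P x y * W1 x y a

/-- Induced joint marginal `P_{Y X̂₁}`. -/
noncomputable def pYA (P : X → Y → ℝ) (W1 : X → Y → X1 → ℝ) (y : Y) (a : X1) : ℝ :=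
  ∑ x, P x y * W1 x y a

/-- Induced conditional `P_{X̂₂|Y X̂₁}`. -/
noncomputable def pBgYA (P : X → Y → ℝ) (W1 : X → Y → X1 → ℝ) (W2 : X → Y → X1 → X2 → ℝ)
    (y : Y) (a : X1) (b : X2) : ℝ :=
  (∑ x, P x y * W1 x y a * W2 x y a b) / pYA P W1 y a

/-- Mutual information `I(X,Y; X̂₁)`. -/
noncomputable def I1 (P : X → Y → ℝ) (W1 : X → Y → X1 → ℝ) : ℝ :=
  ∑ x, ∑ y, ∑ a, P x y * W1 x y a * Real.log (W1 x y a / pA P W1 a)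

/-- Conditional mutual information `I(X; X̂₂ | Y, X̂₁)`. -/
noncomputable def I2 (P : X → Y → ℝ) (W1 : X → Y → X1 → ℝ) (W2 : X → Y → X1 → X2 → ℝ) : ℝ :=
  ∑ x, ∑ y, ∑ a, ∑ b,
    P x y * W1 x y a * W2 x y a b * Real.log (W2 x y a b / pBgYA P W1 W2 y a b)

/-- Expected first distortion. -/
noncomputable def Ed1 (P : X → Y → ℝ) (W1 : X → Y → X1 → ℝ) (d1 : X → X1 → ℝ) : ℝ :=
  ∑ x, ∑ y, ∑ a, P x y * W1 x y a * d1 x a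

/-- Expected second distortion. -/
noncomputable def Ed2 (P : X → Y → ℝ) (W1 : X → Y → X1 → ℝ) (W2 : X → Y → X1 → X2 → ℝ)
    (d2 : X → X2 → ℝ) : ℝ :=
  ∑ x, ∑ y, ∑ a, ∑ b, P x y * W1 x y a * W2 x y a b * d2 x b

/-- The Kaspi rate-distortion function `R_K(P_{XY}, D₁, D₂)`. -/
noncomputable def RK (P : X → Y → ℝ) (d1 : X → X1 → ℝ) (d2 : X → X2 → ℝ) (D1 D2 : ℝ) : ℝ :=
  sInf { r | ∃ (W1 : X → Y → X1 → ℝ) (W2 : X → Y → X1 → X2 → ℝ),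
    IsChan1 W1 ∧ IsChan2 W2 ∧ Ed1 P W1 d1 ≤ D1 ∧ Ed2 P W1 W2 d2 ≤ D2 ∧
    r = I1 P W1 + I2 P W1 W2 }

/-- `(W1, W2)` is a feasible pair achieving `R_K(P, D₁, D₂)`. -/
def Achieves (P : X → Y → ℝ) (d1 : X → X1 → ℝ) (d2 : X → X2 → ℝ) (D1 D2 : ℝ)
    (W1 : X → Y → X1 → ℝ) (W2 : X → Y → X1 → X2 → ℝ) : Prop :=
  IsChan1 W1 ∧ IsChan2 W2 ∧ Ed1 P W1 d1 ≤ D1 ∧ Ed2 P W1 W2 d2 ≤ D2 ∧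
    I1 P W1 + I2 P W1 W2 = RK P d1 d2 D1 D2

/-- `(λ₁, λ₂)` are dual-optimal multipliers for `R_K(P, D₁, D₂)`. -/
def DualOpt (P : X → Y → ℝ) (d1 : X → X1 → ℝ) (d2 : X → X2 → ℝ) (D1 D2 l1 l2 : ℝ) : Prop :=
  0 ≤ l1 ∧ 0 ≤ l2 ∧
  RK P d1 d2 D1 D2 = sInf { r | ∃ (W1 : X → Y → X1 → ℝ) (W2 : X → Y → X1 → X2 → ℝ),
    IsChan1 W1 ∧ IsChan2 W2 ∧
    r = I1 P W1 + I2 P W1 W2 + l1 * (Ed1 P W1 d1 - D1) + l2 * (Ed2 P W1 W2 d2 - D2) }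

/-- `α₂(x,y,x̂₁ | Q_{X̂₂|YX̂₁})`. -/
noncomputable def alpha2 (d2 : X → X2 → ℝ) (l2 : ℝ) (Q2 : Y → X1 → X2 → ℝ)
    (x : X) (y : Y) (a : X1) : ℝ :=
  (∑ b, Q2 y a b * Real.exp (-(l2 * d2 x b)))⁻¹

/-- `α(x,y | Q_{X̂₁}, Q_{X̂₂|YX̂₁})`. -/
noncomputable def alpha (d1 : X → X1 → ℝ) (d2 : X → X2 → ℝ) (l1 l2 : ℝ)
    (Q1 : X1 → ℝ) (Q2 : Y → X1 → X2 → ℝ) (x : X) (y : Y) : ℝ :=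
  (∑ a, Q1 a * Real.exp (-(l1 * d1 x a)) / alpha2 d2 l2 Q2 x y a)⁻¹

/-- The `(D₁,D₂)`-tilted information density for the Kaspi problem, built from
the marginals `Q1 = P*_{X̂₁}`, `Q2 = P*_{X̂₂|YX̂₁}` of an optimal test-channel pair. -/
noncomputable def jK (d1 : X → X1 → ℝ) (d2 : X → X2 → ℝ) (l1 l2 D1 D2 : ℝ)
    (Q1 : X1 → ℝ) (Q2 : Y → X1 → X2 → ℝ) (x : X) (y : Y) : ℝ :=
  Real.log (alpha d1 d2 l1 l2 Q1 Q2 x y) - l1 * D1 - l2 * D2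

end Kaspi

namespace Kaspi

section AuxProofs

variable {X Y X1 X2 : Type*} [Fintype X] [Fintype Y] [Fintype X1] [Fintype X2]

-- ===== auxiliary lemmas =====

lemma gibbs {β : Type*} [Fintype β] (v w : β → ℝ) (hv : ∀ b, 0 ≤ v b)
    (hvs : ∑ b, v b = 1) (hw : ∀ b, 0 ≤ w b) (hsupp : ∀ b, v b ≠ 0 → 0 < w b) :
    -(Real.log (∑ b, w b)) ≤ ∑ b, v b * Real.log (v b / w b) := by
  have hb0 : ∃ b, v b ≠ 0 := by
    by_contra h
    push_neg at h
    simp [h] at hvs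
  obtain ⟨b0, hb0⟩ := hb0
  have hws : 0 < ∑ b, w b := by
    apply Finset.sum_pos' (fun b _ => hw b) ⟨b0, Finset.mem_univ b0, hsupp b0 hb0⟩
  have key : ∀ b : β, v b - w b / ∑ c, w c ≤ v b * Real.log (v b / w b) + v b * Real.log (∑ c, w c) := by
    intro b
    rcases eq_or_ne (v b) 0 with h | h
    · have := div_nonneg (hw b) hws.le
      simp [h]
      linarith
    · have hvb : 0 < v b := lt_of_le_of_ne (hv b) (Ne.symm h)
      have hwb : 0 < w b := hsupp b h
      have harg : 0 < w b / (v b * ∑ c, w c) := by positivity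
      have hmul := mul_le_mul_of_nonneg_left (Real.log_le_sub_one_of_pos harg) (le_of_lt hvb)
      have h1 : v b * (w b / (v b * ∑ c, w c)) = w b / ∑ c, w c := by
        field_simp
      have h2 : v b * Real.log (w b / (v b * ∑ c, w c))
          = -(v b * Real.log (v b / w b) + v b * Real.log (∑ c, w c)) := by
        rw [Real.log_div (ne_of_gt hwb) (by positivity), Real.log_mul (ne_of_gt hvb) (ne_of_gt hws),
          Real.log_div (ne_of_gt hvb) (ne_of_gt hwb)]
        ring
      have h3 : v b * (w b / (v b * ∑ c, w c) - 1) = w b / ∑ c, w c - v b := by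
        rw [mul_sub, h1, mul_one]
      rw [h2, h3] at hmul
      linarith
  have hsum := Finset.sum_le_sum (fun b (_ : b ∈ Finset.univ) => key b)
  rw [Finset.sum_sub_distrib, ← Finset.sum_div, hvs, Finset.sum_add_distrib,
    ← Finset.sum_mul, hvs, one_mul, div_self (ne_of_gt hws)] at hsum
  linarith

/-- Gibbs with a subnormalized reference: the relative-entropy-type sum is nonnegative. -/
lemma gibbs_nonneg {β : Type*} [Fintype β] (v w : β → ℝ) (hv : ∀ b, 0 ≤ v b)
    (hvs : ∑ b, v b = 1) (hw : ∀ b, 0 ≤ w b) (hws : ∑ b, w b ≤ 1)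
    (hsupp : ∀ b, v b ≠ 0 → 0 < w b) :
    0 ≤ ∑ b, v b * Real.log (v b / w b) := by
  have h := gibbs v w hv hvs hw hsupp
  have : Real.log (∑ b, w b) ≤ 0 :=
    Real.log_nonpos (Finset.sum_nonneg fun b _ => hw b) hws
  linarith

lemma log_lb {t : ℝ} (h1 : -(1:ℝ)/2 ≤ t) : t - 2*t^2 ≤ Real.log (1+t) := by
  have h : (0:ℝ) < 1 + t := by linarith
  have h2 := Real.log_le_sub_one_of_pos (inv_pos.2 h)
  rw [Real.log_inv] at h2
  have h3 : 1 - (1+t)⁻¹ ≤ Real.log (1+t) := by linarith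
  have h4 : t - 2*t^2 ≤ 1 - (1+t)⁻¹ := by
    rw [inv_eq_one_div, ← sub_nonneg]
    have : 1 - 1/(1+t) - (t - 2*t^2) = (t^2*(1+2*t))/(1+t) := by
      field_simp
      ring
    rw [this]
    apply div_nonneg _ h.le
    have : (0:ℝ) ≤ 1 + 2*t := by linarith
    positivity
  linarith

lemma pA_nonneg {P : X → Y → ℝ} {W1 : X → Y → X1 → ℝ} (hP : IsPMF2 P) (hW1 : IsChan1 W1)
    (a : X1) : 0 ≤ pA P W1 a :=
  Finset.sum_nonneg fun x _ => Finset.sum_nonneg fun y _ =>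
    mul_nonneg (hP.1 x y) ((hW1 x y).1 a)

lemma pA_sum {P : X → Y → ℝ} {W1 : X → Y → X1 → ℝ} (hP : IsPMF2 P) (hW1 : IsChan1 W1) :
    ∑ a, pA P W1 a = 1 := by
  unfold pA
  rw [Finset.sum_comm]
  have : ∀ x : X, ∑ a : X1, ∑ y, P x y * W1 x y a = ∑ y, P x y := by
    intro x
    rw [Finset.sum_comm]
    exact Finset.sum_congr rfl fun y _ => by
      rw [← Finset.mul_sum, (hW1 x y).2, mul_one]
  rw [Finset.sum_congr rfl fun x _ => this x, hP.2]

lemma pYA_nonneg {P : X → Y → ℝ} {W1 : X → Y → X1 → ℝ} (hP : IsPMF2 P) (hW1 : IsChan1 W1)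
    (y : Y) (a : X1) : 0 ≤ pYA P W1 y a :=
  Finset.sum_nonneg fun x _ => mul_nonneg (hP.1 x y) ((hW1 x y).1 a)

lemma pA_pos {P : X → Y → ℝ} {W1 : X → Y → X1 → ℝ} (hP : IsPMF2 P) (hW1 : IsChan1 W1)
    {x : X} {y : Y} {a : X1} (h : P x y * W1 x y a ≠ 0) : 0 < pA P W1 a := by
  have h0 : 0 < P x y * W1 x y a :=
    lt_of_le_of_ne (mul_nonneg (hP.1 x y) ((hW1 x y).1 a)) (Ne.symm h)
  have h1 : P x y * W1 x y a ≤ ∑ y', P x y' * W1 x y' a :=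
    Finset.single_le_sum (fun y' _ => mul_nonneg (hP.1 x y') ((hW1 x y').1 a)) (Finset.mem_univ y)
  have h2 : ∑ y', P x y' * W1 x y' a ≤ pA P W1 a := by
    unfold pA
    exact Finset.single_le_sum
      (fun x' _ => Finset.sum_nonneg fun y' _ => mul_nonneg (hP.1 x' y') ((hW1 x' y').1 a))
      (Finset.mem_univ x)
  linarith

lemma pYA_pos {P : X → Y → ℝ} {W1 : X → Y → X1 → ℝ} (hP : IsPMF2 P) (hW1 : IsChan1 W1)
    {x : X} {y : Y} {a : X1} (h : P x y * W1 x y a ≠ 0) : 0 < pYA P W1 y a := by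
  have h0 : 0 < P x y * W1 x y a :=
    lt_of_le_of_ne (mul_nonneg (hP.1 x y) ((hW1 x y).1 a)) (Ne.symm h)
  exact lt_of_lt_of_le h0 (Finset.single_le_sum
    (fun x' _ => mul_nonneg (hP.1 x' y) ((hW1 x' y).1 a)) (Finset.mem_univ x))

lemma pBgYA_nonneg {P : X → Y → ℝ} {W1 : X → Y → X1 → ℝ} {W2 : X → Y → X1 → X2 → ℝ}
    (hP : IsPMF2 P) (hW1 : IsChan1 W1) (hW2 : IsChan2 W2) (y : Y) (a : X1) (b : X2) :
    0 ≤ pBgYA P W1 W2 y a b :=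
  div_nonneg (Finset.sum_nonneg fun x _ =>
      mul_nonneg (mul_nonneg (hP.1 x y) ((hW1 x y).1 a)) ((hW2 x y a).1 b))
    (pYA_nonneg hP hW1 y a)

lemma pBgYA_sum_eq_one {P : X → Y → ℝ} {W1 : X → Y → X1 → ℝ} {W2 : X → Y → X1 → X2 → ℝ}
    (hW2 : IsChan2 W2) {y : Y} {a : X1} (h : pYA P W1 y a ≠ 0) :
    ∑ b, pBgYA P W1 W2 y a b = 1 := by
  unfold pBgYA
  rw [← Finset.sum_div, Finset.sum_comm]
  have : ∀ x : X, ∑ b, P x y * W1 x y a * W2 x y a b = P x y * W1 x y a := by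
    intro x; rw [← Finset.mul_sum, (hW2 x y a).2, mul_one]
  rw [Finset.sum_congr rfl fun x _ => this x]
  exact div_self h

lemma pBgYA_sum_le_one {P : X → Y → ℝ} {W1 : X → Y → X1 → ℝ} {W2 : X → Y → X1 → X2 → ℝ}
    (hP : IsPMF2 P) (hW1 : IsChan1 W1) (hW2 : IsChan2 W2) (y : Y) (a : X1) :
    ∑ b, pBgYA P W1 W2 y a b ≤ 1 := by
  rcases eq_or_ne (pYA P W1 y a) 0 with h | h
  · unfold pBgYA
    rw [h]
    simp
  · exact (pBgYA_sum_eq_one hW2 h).le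

lemma pBgYA_pos {P : X → Y → ℝ} {W1 : X → Y → X1 → ℝ} {W2 : X → Y → X1 → X2 → ℝ}
    (hP : IsPMF2 P) (hW1 : IsChan1 W1) (hW2 : IsChan2 W2)
    {x : X} {y : Y} {a : X1} {b : X2} (h : P x y * W1 x y a * W2 x y a b ≠ 0) :
    0 < pBgYA P W1 W2 y a b := by
  have h1 : P x y * W1 x y a ≠ 0 := fun h' => h (by rw [h', zero_mul])
  have hden := pYA_pos hP hW1 h1
  have h0 : 0 < P x y * W1 x y a * W2 x y a b :=
    lt_of_le_of_ne (mul_nonneg (mul_nonneg (hP.1 x y) ((hW1 x y).1 a)) ((hW2 x y a).1 b)) (Ne.symm h)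
  have hnum : 0 < ∑ x', P x' y * W1 x' y a * W2 x' y a b :=
    lt_of_lt_of_le h0 (Finset.single_le_sum (fun x' _ =>
      mul_nonneg (mul_nonneg (hP.1 x' y) ((hW1 x' y).1 a)) ((hW2 x' y a).1 b)) (Finset.mem_univ x))
  exact div_pos hnum hden



-- ===== chunk 2 =====

/-- `1/α₂` as a sum. -/
noncomputable def T2v (d2 : X → X2 → ℝ) (l2 : ℝ) (Q2 : Y → X1 → X2 → ℝ)
    (x : X) (y : Y) (a : X1) : ℝ :=
  ∑ b, Q2 y a b * Real.exp (-(l2 * d2 x b))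

/-- `1/α` as a sum. -/
noncomputable def SQ (d1 : X → X1 → ℝ) (d2 : X → X2 → ℝ) (l1 l2 : ℝ)
    (Q1 : X1 → ℝ) (Q2 : Y → X1 → X2 → ℝ) (x : X) (y : Y) : ℝ :=
  ∑ a, Q1 a * Real.exp (-(l1 * d1 x a)) * T2v d2 l2 Q2 x y a

lemma alpha2_eq (d2 : X → X2 → ℝ) (l2 : ℝ) (Q2 : Y → X1 → X2 → ℝ) (x : X) (y : Y) (a : X1) :
    alpha2 d2 l2 Q2 x y a = (T2v d2 l2 Q2 x y a)⁻¹ := rfl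

lemma alpha_eq (d1 : X → X1 → ℝ) (d2 : X → X2 → ℝ) (l1 l2 : ℝ)
    (Q1 : X1 → ℝ) (Q2 : Y → X1 → X2 → ℝ) (x : X) (y : Y) :
    alpha d1 d2 l1 l2 Q1 Q2 x y = (SQ d1 d2 l1 l2 Q1 Q2 x y)⁻¹ := by
  unfold alpha SQ
  congr 1
  refine Finset.sum_congr rfl fun a _ => ?_
  rw [alpha2_eq, div_inv_eq_mul]

lemma T2v_nonneg {d2 : X → X2 → ℝ} {l2 : ℝ} {Q2 : Y → X1 → X2 → ℝ}
    (hQ2 : ∀ y a b, 0 ≤ Q2 y a b) (x : X) (y : Y) (a : X1) : 0 ≤ T2v d2 l2 Q2 x y a :=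
  Finset.sum_nonneg fun b _ => mul_nonneg (hQ2 y a b) (Real.exp_nonneg _)

lemma Ed1_nonneg {P : X → Y → ℝ} {W1 : X → Y → X1 → ℝ} {d1 : X → X1 → ℝ}
    (hP : IsPMF2 P) (hW1 : IsChan1 W1) (hd1 : ∀ x a, 0 ≤ d1 x a) : 0 ≤ Ed1 P W1 d1 :=
  Finset.sum_nonneg fun x _ => Finset.sum_nonneg fun y _ => Finset.sum_nonneg fun a _ =>
    mul_nonneg (mul_nonneg (hP.1 x y) ((hW1 x y).1 a)) (hd1 x a)

lemma Ed2_nonneg {P : X → Y → ℝ} {W1 : X → Y → X1 → ℝ} {W2 : X → Y → X1 → X2 → ℝ}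
    {d2 : X → X2 → ℝ} (hP : IsPMF2 P) (hW1 : IsChan1 W1) (hW2 : IsChan2 W2)
    (hd2 : ∀ x b, 0 ≤ d2 x b) : 0 ≤ Ed2 P W1 W2 d2 :=
  Finset.sum_nonneg fun x _ => Finset.sum_nonneg fun y _ => Finset.sum_nonneg fun a _ =>
    Finset.sum_nonneg fun b _ => mul_nonneg (mul_nonneg
      (mul_nonneg (hP.1 x y) ((hW1 x y).1 a)) ((hW2 x y a).1 b)) (hd2 x b)

lemma I1_nonneg {P : X → Y → ℝ} {W1 : X → Y → X1 → ℝ} (hP : IsPMF2 P) (hW1 : IsChan1 W1) :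
    0 ≤ I1 P W1 := by
  unfold I1
  refine Finset.sum_nonneg fun x _ => Finset.sum_nonneg fun y _ => ?_
  have hre : ∀ a : X1, P x y * W1 x y a * Real.log (W1 x y a / pA P W1 a)
      = P x y * (W1 x y a * Real.log (W1 x y a / pA P W1 a)) := fun a => mul_assoc _ _ _
  rw [Finset.sum_congr rfl fun a _ => hre a, ← Finset.mul_sum]
  rcases eq_or_ne (P x y) 0 with h | h
  · rw [h, zero_mul]
  · refine mul_nonneg (hP.1 x y) ?_
    refine gibbs_nonneg (W1 x y) (pA P W1) (hW1 x y).1 (hW1 x y).2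
      (pA_nonneg hP hW1) (pA_sum hP hW1).le fun a ha => ?_
    exact pA_pos hP hW1 (mul_ne_zero h ha)

lemma I2_nonneg {P : X → Y → ℝ} {W1 : X → Y → X1 → ℝ} {W2 : X → Y → X1 → X2 → ℝ}
    (hP : IsPMF2 P) (hW1 : IsChan1 W1) (hW2 : IsChan2 W2) : 0 ≤ I2 P W1 W2 := by
  unfold I2
  refine Finset.sum_nonneg fun x _ => Finset.sum_nonneg fun y _ =>
    Finset.sum_nonneg fun a _ => ?_
  have hre : ∀ b : X2, P x y * W1 x y a * W2 x y a b * Real.log (W2 x y a b / pBgYA P W1 W2 y a b)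
      = (P x y * W1 x y a) * (W2 x y a b * Real.log (W2 x y a b / pBgYA P W1 W2 y a b)) :=
    fun b => by ring
  rw [Finset.sum_congr rfl fun b _ => hre b, ← Finset.mul_sum]
  rcases eq_or_ne (P x y * W1 x y a) 0 with h | h
  · rw [h, zero_mul]
  · refine mul_nonneg (mul_nonneg (hP.1 x y) ((hW1 x y).1 a)) ?_
    refine gibbs_nonneg (W2 x y a) (pBgYA P W1 W2 y a) (hW2 x y a).1 (hW2 x y a).2
      (pBgYA_nonneg hP hW1 hW2 y a) (pBgYA_sum_le_one hP hW1 hW2 y a) fun b hb => ?_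
    exact pBgYA_pos hP hW1 hW2 (mul_ne_zero h hb)

/-- The Lagrangian of any channel pair is an upper bound for `RK`. -/
lemma RK_le_lagrangian {P : X → Y → ℝ} {d1 : X → X1 → ℝ} {d2 : X → X2 → ℝ} {D1 D2 l1 l2 : ℝ}
    (hP : IsPMF2 P) (hd1 : ∀ x a, 0 ≤ d1 x a) (hd2 : ∀ x b, 0 ≤ d2 x b)
    (hdual : DualOpt P d1 d2 D1 D2 l1 l2)
    (V1 : X → Y → X1 → ℝ) (V2 : X → Y → X1 → X2 → ℝ) (hV1 : IsChan1 V1) (hV2 : IsChan2 V2) :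
    RK P d1 d2 D1 D2 ≤ I1 P V1 + I2 P V1 V2 + l1 * (Ed1 P V1 d1 - D1) + l2 * (Ed2 P V1 V2 d2 - D2) := by
  obtain ⟨hl1, hl2, hrk⟩ := hdual
  rw [hrk]
  refine csInf_le ⟨-(l1*D1) - l2*D2, ?_⟩ ⟨V1, V2, hV1, hV2, rfl⟩
  rintro r ⟨U1, U2, hU1, hU2, rfl⟩
  have h1 := I1_nonneg hP hU1
  have h2 := I2_nonneg hP hU1 hU2
  have h3 := Ed1_nonneg hP hU1 hd1
  have h4 := Ed2_nonneg hP hU1 hU2 hd2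
  nlinarith [mul_nonneg hl1 h3, mul_nonneg hl2 h4]
/-- Per-(x,y) Gibbs bound at the optimizer: lower bound the full Lagrangian integrand. -/
lemma perxy_lower {P : X → Y → ℝ} {d1 : X → X1 → ℝ} {d2 : X → X2 → ℝ} {l1 l2 : ℝ}
    {W1 : X → Y → X1 → ℝ} {W2 : X → Y → X1 → X2 → ℝ}
    (hP : IsPMF2 P) (hW1 : IsChan1 W1) (hW2 : IsChan2 W2) (x : X) (y : Y) :
    -(P x y * Real.log (SQ d1 d2 l1 l2 (pA P W1) (pBgYA P W1 W2) x y)) ≤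
      P x y * ((∑ a, W1 x y a * Real.log (W1 x y a / pA P W1 a))
        + (∑ a, ∑ b, W1 x y a * W2 x y a b * Real.log (W2 x y a b / pBgYA P W1 W2 y a b))
        + (∑ a, W1 x y a * (l1 * d1 x a))
        + (∑ a, ∑ b, W1 x y a * W2 x y a b * (l2 * d2 x b))) := by
  rcases eq_or_ne (P x y) 0 with hPxy | hPxy
  · rw [hPxy]; simp
  · set v : X1 × X2 → ℝ := fun p => W1 x y p.1 * W2 x y p.1 p.2 with hv
    set w : X1 × X2 → ℝ := fun p => pA P W1 p.1 * pBgYA P W1 W2 y p.1 p.2 *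
      Real.exp (-(l1 * d1 x p.1)) * Real.exp (-(l2 * d2 x p.2)) with hw
    have hv0 : ∀ p, 0 ≤ v p := fun p => mul_nonneg ((hW1 x y).1 p.1) ((hW2 x y p.1).1 p.2)
    have hvs : ∑ p, v p = 1 := by
      rw [Fintype.sum_prod_type]
      have : ∀ a : X1, ∑ b, v (a, b) = W1 x y a := by
        intro a
        simp only [hv]
        rw [← Finset.mul_sum, (hW2 x y a).2, mul_one]
      rw [Finset.sum_congr rfl fun a _ => this a, (hW1 x y).2]
    have hw0 : ∀ p, 0 ≤ w p := fun p => by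
      have := pA_nonneg hP hW1 p.1
      have := pBgYA_nonneg hP hW1 hW2 y p.1 p.2
      positivity
    have hsupp : ∀ p, v p ≠ 0 → 0 < w p := by
      intro p hp
      have h1 : W1 x y p.1 ≠ 0 := fun h => hp (by simp [hv, h])
      have h2 : W2 x y p.1 p.2 ≠ 0 := fun h => hp (by simp [hv, h])
      have hA := pA_pos hP hW1 (mul_ne_zero hPxy h1)
      have hB := pBgYA_pos hP hW1 hW2 (mul_ne_zero (mul_ne_zero hPxy h1) h2)
      simp only [hw]
      positivity
    have hwsum : ∑ p, w p = SQ d1 d2 l1 l2 (pA P W1) (pBgYA P W1 W2) x y := by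
      rw [Fintype.sum_prod_type]
      unfold SQ T2v
      refine Finset.sum_congr rfl fun a _ => ?_
      rw [Finset.mul_sum]
      exact Finset.sum_congr rfl fun b _ => by simp only [hw]; ring
    have hg := gibbs v w hv0 hvs hw0 hsupp
    rw [hwsum] at hg
    have hident : ∑ p, v p * Real.log (v p / w p)
        = (∑ a, W1 x y a * Real.log (W1 x y a / pA P W1 a))
        + (∑ a, ∑ b, W1 x y a * W2 x y a b * Real.log (W2 x y a b / pBgYA P W1 W2 y a b))
        + (∑ a, W1 x y a * (l1 * d1 x a))
        + (∑ a, ∑ b, W1 x y a * W2 x y a b * (l2 * d2 x b)) := by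
      have hterm : ∀ p : X1 × X2, v p * Real.log (v p / w p)
          = W1 x y p.1 * W2 x y p.1 p.2 * Real.log (W1 x y p.1 / pA P W1 p.1)
          + W1 x y p.1 * W2 x y p.1 p.2 * Real.log (W2 x y p.1 p.2 / pBgYA P W1 W2 y p.1 p.2)
          + W1 x y p.1 * W2 x y p.1 p.2 * (l1 * d1 x p.1)
          + W1 x y p.1 * W2 x y p.1 p.2 * (l2 * d2 x p.2) := by
        intro p
        rcases eq_or_ne (v p) 0 with h | h
        · have : W1 x y p.1 * W2 x y p.1 p.2 = 0 := h
          rw [h, this]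
          ring
        · have h1 : W1 x y p.1 ≠ 0 := fun h' => h (by simp [hv, h'])
          have h2 : W2 x y p.1 p.2 ≠ 0 := fun h' => h (by simp [hv, h'])
          have hW1p : 0 < W1 x y p.1 := lt_of_le_of_ne ((hW1 x y).1 p.1) (Ne.symm h1)
          have hW2p : 0 < W2 x y p.1 p.2 := lt_of_le_of_ne ((hW2 x y p.1).1 p.2) (Ne.symm h2)
          have hA := pA_pos hP hW1 (mul_ne_zero hPxy h1)
          have hB := pBgYA_pos hP hW1 hW2 (mul_ne_zero (mul_ne_zero hPxy h1) h2)
          have hvw : v p / w p = (W1 x y p.1 / pA P W1 p.1) * (W2 x y p.1 p.2 / pBgYA P W1 W2 y p.1 p.2)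
              / (Real.exp (-(l1 * d1 x p.1)) * Real.exp (-(l2 * d2 x p.2))) := by
            simp only [hv, hw]
            field_simp
          rw [hvw, Real.log_div (by positivity) (by positivity),
            Real.log_mul (by positivity) (by positivity),
            Real.log_mul (Real.exp_ne_zero _) (Real.exp_ne_zero _),
            Real.log_exp, Real.log_exp]
          ring
      rw [Finset.sum_congr rfl fun p _ => hterm p, Finset.sum_add_distrib,
        Finset.sum_add_distrib, Finset.sum_add_distrib, Fintype.sum_prod_type,
        Fintype.sum_prod_type, Fintype.sum_prod_type, Fintype.sum_prod_type]
      congr 1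
      congr 1
      congr 1
      · refine Finset.sum_congr rfl fun a _ => ?_
        have : ∀ b : X2, W1 x y a * W2 x y a b * Real.log (W1 x y a / pA P W1 a)
            = (W1 x y a * Real.log (W1 x y a / pA P W1 a)) * W2 x y a b := fun b => by ring
        rw [Finset.sum_congr rfl fun b _ => this b, ← Finset.mul_sum, (hW2 x y a).2, mul_one]
      · refine Finset.sum_congr rfl fun a _ => ?_
        have : ∀ b : X2, W1 x y a * W2 x y a b * (l1 * d1 x a)
            = (W1 x y a * (l1 * d1 x a)) * W2 x y a b := fun b => by ring
        rw [Finset.sum_congr rfl fun b _ => this b, ← Finset.mul_sum, (hW2 x y a).2, mul_one]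
    rw [hident] at hg
    have hPpos : 0 < P x y := lt_of_le_of_ne (hP.1 x y) (Ne.symm hPxy)
    calc -(P x y * Real.log (SQ d1 d2 l1 l2 (pA P W1) (pBgYA P W1 W2) x y))
        = P x y * (-(Real.log (SQ d1 d2 l1 l2 (pA P W1) (pBgYA P W1 W2) x y))) := by ring
      _ ≤ _ := mul_le_mul_of_nonneg_left hg hPpos.le
/-- At an optimal pair, the tilted-information functional lower-bounds `RK`. -/
lemma F_le_RK {P : X → Y → ℝ} {d1 : X → X1 → ℝ} {d2 : X → X2 → ℝ} {D1 D2 l1 l2 : ℝ}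
    {W1 : X → Y → X1 → ℝ} {W2 : X → Y → X1 → X2 → ℝ}
    (hP : IsPMF2 P) (hl1 : 0 ≤ l1) (hl2 : 0 ≤ l2)
    (hach : Achieves P d1 d2 D1 D2 W1 W2) :
    -(∑ x, ∑ y, P x y * Real.log (SQ d1 d2 l1 l2 (pA P W1) (pBgYA P W1 W2) x y))
      - l1 * D1 - l2 * D2 ≤ RK P d1 d2 D1 D2 := by
  obtain ⟨hW1, hW2, hE1, hE2, hopt⟩ := hach
  have HS := Finset.sum_le_sum (fun x (_ : x ∈ Finset.univ) =>
    Finset.sum_le_sum (fun y (_ : y ∈ Finset.univ) => perxy_lower hP hW1 hW2 (d1 := d1)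
      (d2 := d2) (l1 := l1) (l2 := l2) x y))
  have e1 : ∑ x, ∑ y, -(P x y * Real.log (SQ d1 d2 l1 l2 (pA P W1) (pBgYA P W1 W2) x y))
      = -(∑ x, ∑ y, P x y * Real.log (SQ d1 d2 l1 l2 (pA P W1) (pBgYA P W1 W2) x y)) := by
    simp
  have e2 : ∑ x, ∑ y, (P x y * ((∑ a, W1 x y a * Real.log (W1 x y a / pA P W1 a))
        + (∑ a, ∑ b, W1 x y a * W2 x y a b * Real.log (W2 x y a b / pBgYA P W1 W2 y a b))
        + (∑ a, W1 x y a * (l1 * d1 x a))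
        + (∑ a, ∑ b, W1 x y a * W2 x y a b * (l2 * d2 x b))))
      = I1 P W1 + I2 P W1 W2 + l1 * Ed1 P W1 d1 + l2 * Ed2 P W1 W2 d2 := by
    have perxy : ∀ x y, P x y * ((∑ a, W1 x y a * Real.log (W1 x y a / pA P W1 a))
        + (∑ a, ∑ b, W1 x y a * W2 x y a b * Real.log (W2 x y a b / pBgYA P W1 W2 y a b))
        + (∑ a, W1 x y a * (l1 * d1 x a))
        + (∑ a, ∑ b, W1 x y a * W2 x y a b * (l2 * d2 x b)))
        = (∑ a, P x y * W1 x y a * Real.log (W1 x y a / pA P W1 a))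
        + (∑ a, ∑ b, P x y * W1 x y a * W2 x y a b * Real.log (W2 x y a b / pBgYA P W1 W2 y a b))
        + l1 * (∑ a, P x y * W1 x y a * d1 x a)
        + l2 * (∑ a, ∑ b, P x y * W1 x y a * W2 x y a b * d2 x b) := by
      intro x y
      simp only [mul_add, Finset.mul_sum]
      congr 1
      congr 1
      congr 1
      · exact Finset.sum_congr rfl fun a _ => by ring
      · exact Finset.sum_congr rfl fun a _ =>
          Finset.sum_congr rfl fun b _ => by ring
      · exact Finset.sum_congr rfl fun a _ => by ring
      · exact Finset.sum_congr rfl fun a _ =>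
          Finset.sum_congr rfl fun b _ => by ring
    rw [Finset.sum_congr rfl fun x _ => Finset.sum_congr rfl fun y _ => perxy x y]
    simp only [Finset.sum_add_distrib, ← Finset.mul_sum]
    rfl
  rw [e1] at HS
  rw [e2] at HS
  have hmul1 : l1 * Ed1 P W1 d1 ≤ l1 * D1 := mul_le_mul_of_nonneg_left hE1 hl1
  have hmul2 : l2 * Ed2 P W1 W2 d2 ≤ l2 * D2 := mul_le_mul_of_nonneg_left hE2 hl2
  linarith [hopt.ge, hopt.le]
lemma sum_comm3 (f : X → Y → X1 → ℝ) :
    ∑ x, ∑ y, ∑ a, f x y a = ∑ a, ∑ x, ∑ y, f x y a := by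
  calc ∑ x, ∑ y, ∑ a, f x y a = ∑ x, ∑ a, ∑ y, f x y a :=
        Finset.sum_congr rfl fun x _ => Finset.sum_comm
    _ = ∑ a, ∑ x, ∑ y, f x y a := Finset.sum_comm

lemma sum_comm4 (f : X → Y → X1 → X2 → ℝ) :
    ∑ x, ∑ y, ∑ a, ∑ b, f x y a b = ∑ y, ∑ a, ∑ b, ∑ x, f x y a b := by
  calc ∑ x, ∑ y, ∑ a, ∑ b, f x y a b = ∑ y, ∑ x, ∑ a, ∑ b, f x y a b :=
        Finset.sum_comm
    _ = ∑ y, ∑ a, ∑ x, ∑ b, f x y a b :=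
        Finset.sum_congr rfl fun y _ => Finset.sum_comm
    _ = ∑ y, ∑ a, ∑ b, ∑ x, f x y a b :=
        Finset.sum_congr rfl fun y _ => Finset.sum_congr rfl fun a _ => Finset.sum_comm

/-- Replacing the induced marginal by an arbitrary (sub-)pmf increases the `I1` sum. -/
lemma swap1 {P : X → Y → ℝ} {V1 : X → Y → X1 → ℝ} {Q1 : X1 → ℝ}
    (hP : IsPMF2 P) (hV1 : IsChan1 V1)
    (hQ0 : ∀ a, 0 ≤ Q1 a) (hQs : ∑ a, Q1 a ≤ 1)
    (hsupp : ∀ x y a, P x y * V1 x y a ≠ 0 → 0 < Q1 a) :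
    I1 P V1 ≤ ∑ x, ∑ y, ∑ a, P x y * V1 x y a * Real.log (V1 x y a / Q1 a) := by
  have hterm : ∀ x y a, P x y * V1 x y a * Real.log (V1 x y a / Q1 a)
      - P x y * V1 x y a * Real.log (V1 x y a / pA P V1 a)
      = P x y * V1 x y a * Real.log (pA P V1 a / Q1 a) := by
    intro x y a
    rcases eq_or_ne (P x y * V1 x y a) 0 with h | h
    · rw [h]; ring
    · have hPx : P x y ≠ 0 := fun h' => h (by rw [h', zero_mul])
      have hV : V1 x y a ≠ 0 := fun h' => h (by rw [h', mul_zero])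
      have hVpos : 0 < V1 x y a := lt_of_le_of_ne ((hV1 x y).1 a) (Ne.symm hV)
      have hApos := pA_pos hP hV1 h
      have hQpos := hsupp x y a h
      rw [Real.log_div hV (ne_of_gt hQpos), Real.log_div hV (ne_of_gt hApos),
        Real.log_div (ne_of_gt hApos) (ne_of_gt hQpos)]
      ring
  have hdiff : (∑ x, ∑ y, ∑ a, P x y * V1 x y a * Real.log (V1 x y a / Q1 a)) - I1 P V1
      = ∑ a, pA P V1 a * Real.log (pA P V1 a / Q1 a) := by
    unfold I1
    rw [← Finset.sum_sub_distrib]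
    simp only [← Finset.sum_sub_distrib]
    rw [Finset.sum_congr rfl fun x _ => Finset.sum_congr rfl fun y _ =>
      Finset.sum_congr rfl fun a _ => hterm x y a, sum_comm3]
    refine Finset.sum_congr rfl fun a _ => ?_
    unfold pA
    simp only [← Finset.sum_mul]
  have hge : 0 ≤ ∑ a, pA P V1 a * Real.log (pA P V1 a / Q1 a) := by
    refine gibbs_nonneg (pA P V1) Q1 (pA_nonneg hP hV1) (pA_sum hP hV1) hQ0 hQs fun a ha => ?_
    obtain ⟨x, -, hx⟩ := Finset.exists_ne_zero_of_sum_ne_zero ha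
    obtain ⟨y, -, hy⟩ := Finset.exists_ne_zero_of_sum_ne_zero hx
    exact hsupp x y a hy
  linarith

lemma sum_x_PV1V2 {P : X → Y → ℝ} {V1 : X → Y → X1 → ℝ} {V2 : X → Y → X1 → X2 → ℝ}
    (hP : IsPMF2 P) (hV1 : IsChan1 V1) (hV2 : IsChan2 V2) (y : Y) (a : X1) (b : X2) :
    ∑ x, P x y * V1 x y a * V2 x y a b = pYA P V1 y a * pBgYA P V1 V2 y a b := by
  rcases eq_or_ne (pYA P V1 y a) 0 with h | h
  · rw [h, zero_mul]
    refine Finset.sum_eq_zero fun x _ => ?_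
    have h0 : P x y * V1 x y a = 0 := by
      by_contra hc
      exact absurd h (ne_of_gt (pYA_pos hP hV1 hc))
    rw [h0, zero_mul]
  · unfold pBgYA
    rw [mul_div_cancel₀ _ h]

/-- Replacing the induced conditional by an arbitrary (sub-)pmf increases the `I2` sum. -/
lemma swap2 {P : X → Y → ℝ} {V1 : X → Y → X1 → ℝ} {V2 : X → Y → X1 → X2 → ℝ}
    {Q2 : Y → X1 → X2 → ℝ}
    (hP : IsPMF2 P) (hV1 : IsChan1 V1) (hV2 : IsChan2 V2)
    (hQ0 : ∀ y a b, 0 ≤ Q2 y a b) (hQs : ∀ y a, ∑ b, Q2 y a b ≤ 1)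
    (hsupp : ∀ x y a b, P x y * V1 x y a * V2 x y a b ≠ 0 → 0 < Q2 y a b) :
    I2 P V1 V2 ≤ ∑ x, ∑ y, ∑ a, ∑ b,
      P x y * V1 x y a * V2 x y a b * Real.log (V2 x y a b / Q2 y a b) := by
  have hterm : ∀ x y a b, P x y * V1 x y a * V2 x y a b * Real.log (V2 x y a b / Q2 y a b)
      - P x y * V1 x y a * V2 x y a b * Real.log (V2 x y a b / pBgYA P V1 V2 y a b)
      = P x y * V1 x y a * V2 x y a b * Real.log (pBgYA P V1 V2 y a b / Q2 y a b) := by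
    intro x y a b
    rcases eq_or_ne (P x y * V1 x y a * V2 x y a b) 0 with h | h
    · rw [h]; ring
    · have hV : V2 x y a b ≠ 0 := fun h' => h (by rw [h', mul_zero])
      have hBpos := pBgYA_pos hP hV1 hV2 h
      have hQpos := hsupp x y a b h
      rw [Real.log_div hV (ne_of_gt hQpos), Real.log_div hV (ne_of_gt hBpos),
        Real.log_div (ne_of_gt hBpos) (ne_of_gt hQpos)]
      ring
  have hdiff : (∑ x, ∑ y, ∑ a, ∑ b,
        P x y * V1 x y a * V2 x y a b * Real.log (V2 x y a b / Q2 y a b)) - I2 P V1 V2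
      = ∑ y, ∑ a, ∑ b, pYA P V1 y a * pBgYA P V1 V2 y a b
          * Real.log (pBgYA P V1 V2 y a b / Q2 y a b) := by
    unfold I2
    rw [← Finset.sum_sub_distrib]
    simp only [← Finset.sum_sub_distrib]
    rw [Finset.sum_congr rfl fun x _ => Finset.sum_congr rfl fun y _ =>
      Finset.sum_congr rfl fun a _ => Finset.sum_congr rfl fun b _ => hterm x y a b, sum_comm4]
    refine Finset.sum_congr rfl fun y _ => Finset.sum_congr rfl fun a _ =>
      Finset.sum_congr rfl fun b _ => ?_
    rw [← Finset.sum_mul, sum_x_PV1V2 hP hV1 hV2]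
  have hge : 0 ≤ ∑ y, ∑ a, ∑ b, pYA P V1 y a * pBgYA P V1 V2 y a b
      * Real.log (pBgYA P V1 V2 y a b / Q2 y a b) := by
    refine Finset.sum_nonneg fun y _ => Finset.sum_nonneg fun a _ => ?_
    rcases eq_or_ne (pYA P V1 y a) 0 with h | h
    · refine Finset.sum_nonneg fun b _ => ?_
      rw [h, zero_mul, zero_mul]
    · have hre : ∀ b : X2, pYA P V1 y a * pBgYA P V1 V2 y a b
          * Real.log (pBgYA P V1 V2 y a b / Q2 y a b)
          = pYA P V1 y a * (pBgYA P V1 V2 y a b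
          * Real.log (pBgYA P V1 V2 y a b / Q2 y a b)) := fun b => mul_assoc _ _ _
      rw [Finset.sum_congr rfl fun b _ => hre b, ← Finset.mul_sum]
      refine mul_nonneg (pYA_nonneg hP hV1 y a) ?_
      refine gibbs_nonneg _ _ (pBgYA_nonneg hP hV1 hV2 y a) (pBgYA_sum_eq_one hV2 h)
        (hQ0 y a) (hQs y a) fun b hb => ?_
      have : ∃ x, P x y * V1 x y a * V2 x y a b ≠ 0 := by
        by_contra hc
        push_neg at hc
        refine hb ?_
        unfold pBgYA
        rw [Finset.sum_eq_zero fun x _ => hc x, zero_div]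
      obtain ⟨x, hx⟩ := this
      exact hsupp x y a b hx
  linarith
/-- For every reference pair `(Q1, Q2)` (with `Q2` possibly subnormalized but with positive
tilted mass), the tilted-information functional upper-bounds `RK`. -/
lemma RK_le_F {P : X → Y → ℝ} {d1 : X → X1 → ℝ} {d2 : X → X2 → ℝ} {D1 D2 l1 l2 : ℝ}
    (hP : IsPMF2 P) (hd1 : ∀ x a, 0 ≤ d1 x a) (hd2 : ∀ x b, 0 ≤ d2 x b)
    (hdual : DualOpt P d1 d2 D1 D2 l1 l2)
    (Q1 : X1 → ℝ) (hQ10 : ∀ a, 0 ≤ Q1 a) (hQ1s : ∑ a, Q1 a = 1)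
    (Q2 : Y → X1 → X2 → ℝ) (hQ20 : ∀ y a b, 0 ≤ Q2 y a b) (hQ2s : ∀ y a, ∑ b, Q2 y a b ≤ 1)
    (hT2 : ∀ x y a, 0 < T2v d2 l2 Q2 x y a) :
    RK P d1 d2 D1 D2 ≤
      -(∑ x, ∑ y, P x y * Real.log (SQ d1 d2 l1 l2 Q1 Q2 x y)) - l1 * D1 - l2 * D2 := by
  have hS : ∀ x y, 0 < SQ d1 d2 l1 l2 Q1 Q2 x y := by
    intro x y
    have : ∃ a, Q1 a ≠ 0 := by
      by_contra h
      push_neg at h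
      simp [h] at hQ1s
    obtain ⟨a0, ha0⟩ := this
    have ha0' : 0 < Q1 a0 := lt_of_le_of_ne (hQ10 a0) (Ne.symm ha0)
    refine Finset.sum_pos' (fun a _ => ?_) ⟨a0, Finset.mem_univ a0, ?_⟩
    · exact mul_nonneg (mul_nonneg (hQ10 a) (Real.exp_nonneg _)) (hT2 x y a).le
    · have := hT2 x y a0
      positivity
  set V1 : X → Y → X1 → ℝ := fun x y a =>
    Q1 a * Real.exp (-(l1 * d1 x a)) * T2v d2 l2 Q2 x y a / SQ d1 d2 l1 l2 Q1 Q2 x y with hV1def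
  set V2 : X → Y → X1 → X2 → ℝ := fun x y a b =>
    Q2 y a b * Real.exp (-(l2 * d2 x b)) / T2v d2 l2 Q2 x y a with hV2def
  have hV1 : IsChan1 V1 := by
    intro x y
    constructor
    · intro a
      have := hT2 x y a
      have := hS x y
      have := hQ10 a
      simp only [hV1def]
      positivity
    · simp only [hV1def]
      rw [← Finset.sum_div]
      exact div_self (ne_of_gt (hS x y))
  have hV2 : IsChan2 V2 := by
    intro x y a
    constructor
    · intro b
      have := hT2 x y a
      have := hQ20 y a b
      simp only [hV2def]
      positivity
    · simp only [hV2def]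
      rw [← Finset.sum_div]
      exact div_self (ne_of_gt (hT2 x y a))
  have hlag := RK_le_lagrangian hP hd1 hd2 hdual V1 V2 hV1 hV2
  have hswap1 : I1 P V1 ≤ ∑ x, ∑ y, ∑ a, P x y * V1 x y a * Real.log (V1 x y a / Q1 a) := by
    refine swap1 hP hV1 hQ10 hQ1s.le fun x y a h => ?_
    have hV : V1 x y a ≠ 0 := fun h' => h (by rw [h', mul_zero])
    rcases eq_or_ne (Q1 a) 0 with hq | hq
    · exact absurd (by simp [hV1def, hq]) hV
    · exact lt_of_le_of_ne (hQ10 a) (Ne.symm hq)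
  have hswap2 : I2 P V1 V2 ≤ ∑ x, ∑ y, ∑ a, ∑ b,
      P x y * V1 x y a * V2 x y a b * Real.log (V2 x y a b / Q2 y a b) := by
    refine swap2 hP hV1 hV2 hQ20 hQ2s fun x y a b h => ?_
    have hV : V2 x y a b ≠ 0 := fun h' => h (by rw [h', mul_zero])
    rcases eq_or_ne (Q2 y a b) 0 with hq | hq
    · exact absurd (by simp [hV2def, hq]) hV
    · exact lt_of_le_of_ne (hQ20 y a b) (Ne.symm hq)
  -- the exact computation of the tilted Lagrangian
  have hcomp : (∑ x, ∑ y, ∑ a, P x y * V1 x y a * Real.log (V1 x y a / Q1 a))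
      + (∑ x, ∑ y, ∑ a, ∑ b, P x y * V1 x y a * V2 x y a b * Real.log (V2 x y a b / Q2 y a b))
      + l1 * Ed1 P V1 d1 + l2 * Ed2 P V1 V2 d2
      = -(∑ x, ∑ y, P x y * Real.log (SQ d1 d2 l1 l2 Q1 Q2 x y)) := by
    unfold Ed1 Ed2
    simp only [Finset.mul_sum]
    rw [← Finset.sum_add_distrib, ← Finset.sum_add_distrib, ← Finset.sum_add_distrib,
      ← Finset.sum_neg_distrib]
    refine Finset.sum_congr rfl fun x _ => ?_
    rw [← Finset.sum_add_distrib, ← Finset.sum_add_distrib, ← Finset.sum_add_distrib,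
      ← Finset.sum_neg_distrib]
    refine Finset.sum_congr rfl fun y _ => ?_
    -- now a fixed (x, y)
    rcases eq_or_ne (P x y) 0 with hPxy | hPxy
    · simp [hPxy]
    · have hA : ∀ a, P x y * V1 x y a * Real.log (V1 x y a / Q1 a)
          + l1 * (P x y * V1 x y a * d1 x a)
          = P x y * V1 x y a * (Real.log (T2v d2 l2 Q2 x y a)
            - Real.log (SQ d1 d2 l1 l2 Q1 Q2 x y)) := by
        intro a
        rcases eq_or_ne (V1 x y a) 0 with hv | hv
        · rw [hv]; ring
        · have hq : Q1 a ≠ 0 := by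
            intro hq
            exact hv (by simp [hV1def, hq])
          have hqpos : 0 < Q1 a := lt_of_le_of_ne (hQ10 a) (Ne.symm hq)
          have ht := hT2 x y a
          have hs := hS x y
          have hdiv : V1 x y a / Q1 a
              = Real.exp (-(l1 * d1 x a)) * T2v d2 l2 Q2 x y a / SQ d1 d2 l1 l2 Q1 Q2 x y := by
            simp only [hV1def]
            field_simp
          rw [hdiv, Real.log_div (by positivity) (ne_of_gt hs),
            Real.log_mul (Real.exp_ne_zero _) (ne_of_gt ht), Real.log_exp]
          ring
      have hB : ∀ a b, P x y * V1 x y a * V2 x y a b * Real.log (V2 x y a b / Q2 y a b)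
          + l2 * (P x y * V1 x y a * V2 x y a b * d2 x b)
          = P x y * V1 x y a * V2 x y a b * (-(Real.log (T2v d2 l2 Q2 x y a))) := by
        intro a b
        rcases eq_or_ne (P x y * V1 x y a * V2 x y a b) 0 with hv | hv
        · rw [hv]; ring
        · have hv2 : V2 x y a b ≠ 0 := fun h' => hv (by rw [h', mul_zero])
          have hq : Q2 y a b ≠ 0 := by
            intro hq
            exact hv2 (by simp [hV2def, hq])
          have ht := hT2 x y a
          have hdiv : V2 x y a b / Q2 y a b
              = Real.exp (-(l2 * d2 x b)) / T2v d2 l2 Q2 x y a := by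
            simp only [hV2def]
            field_simp
          rw [hdiv, Real.log_div (Real.exp_ne_zero _) (ne_of_gt ht), Real.log_exp]
          ring
      -- combine: group the four sums into ∑_a [hA] + ∑_a ∑_b [hB]
      have hgoal : (∑ a, (P x y * V1 x y a * Real.log (V1 x y a / Q1 a)
            + l1 * (P x y * V1 x y a * d1 x a)))
          + (∑ a, ∑ b, (P x y * V1 x y a * V2 x y a b * Real.log (V2 x y a b / Q2 y a b)
            + l2 * (P x y * V1 x y a * V2 x y a b * d2 x b)))
          = -(P x y * Real.log (SQ d1 d2 l1 l2 Q1 Q2 x y)) := by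
        rw [Finset.sum_congr rfl fun a _ => hA a,
          Finset.sum_congr rfl fun a _ => Finset.sum_congr rfl fun b _ => hB a b]
        have hsb : ∀ a, ∑ b, P x y * V1 x y a * V2 x y a b * (-(Real.log (T2v d2 l2 Q2 x y a)))
            = P x y * V1 x y a * (-(Real.log (T2v d2 l2 Q2 x y a))) := by
          intro a
          have : ∀ b : X2, P x y * V1 x y a * V2 x y a b * (-(Real.log (T2v d2 l2 Q2 x y a)))
              = (P x y * V1 x y a * (-(Real.log (T2v d2 l2 Q2 x y a)))) * V2 x y a b :=
            fun b => by ring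
          rw [Finset.sum_congr rfl fun b _ => this b, ← Finset.mul_sum, (hV2 x y a).2, mul_one]
        rw [Finset.sum_congr rfl fun a _ => hsb a, ← Finset.sum_add_distrib]
        have : ∀ a, P x y * V1 x y a * (Real.log (T2v d2 l2 Q2 x y a)
              - Real.log (SQ d1 d2 l1 l2 Q1 Q2 x y))
            + P x y * V1 x y a * (-(Real.log (T2v d2 l2 Q2 x y a)))
            = (P x y * (-(Real.log (SQ d1 d2 l1 l2 Q1 Q2 x y)))) * V1 x y a := fun a => by ring
        rw [Finset.sum_congr rfl fun a _ => this a, ← Finset.mul_sum, (hV1 x y).2, mul_one]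
        ring
      rw [← hgoal]
      simp only [Finset.sum_add_distrib]
      ring
  linarith
lemma SQstar_pos {P : X → Y → ℝ} {d1 : X → X1 → ℝ} {d2 : X → X2 → ℝ} {l1 l2 : ℝ}
    {W1 : X → Y → X1 → ℝ} {W2 : X → Y → X1 → X2 → ℝ}
    (hP : IsPMF2 P) (hW1 : IsChan1 W1) (hW2 : IsChan2 W2) {x : X} {y : Y} (hPxy : P x y ≠ 0) :
    0 < SQ d1 d2 l1 l2 (pA P W1) (pBgYA P W1 W2) x y := by
  have : ∃ a, P x y * W1 x y a ≠ 0 := by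
    by_contra h
    push_neg at h
    have h0 : ∑ a, P x y * W1 x y a = 0 := Finset.sum_eq_zero fun a _ => h a
    rw [← Finset.mul_sum, (hW1 x y).2, mul_one] at h0
    exact hPxy h0
  obtain ⟨a, ha⟩ := this
  have hpYA := pYA_pos hP hW1 ha
  have hpA := pA_pos hP hW1 ha
  have hT2 : 0 < T2v d2 l2 (pBgYA P W1 W2) x y a := by
    have hsum := pBgYA_sum_eq_one (P := P) (W1 := W1) (W2 := W2) hW2 (ne_of_gt hpYA)
    have : ∃ b, pBgYA P W1 W2 y a b ≠ 0 := by
      by_contra h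
      push_neg at h
      rw [Finset.sum_eq_zero fun b _ => h b] at hsum
      exact one_ne_zero hsum.symm
    obtain ⟨b, hb⟩ := this
    have hbpos : 0 < pBgYA P W1 W2 y a b :=
      lt_of_le_of_ne (pBgYA_nonneg hP hW1 hW2 y a b) (Ne.symm hb)
    refine Finset.sum_pos' (fun b' _ => mul_nonneg (pBgYA_nonneg hP hW1 hW2 y a b')
      (Real.exp_nonneg _)) ⟨b, Finset.mem_univ b, by positivity⟩
  refine Finset.sum_pos' (fun a' _ => mul_nonneg (mul_nonneg (pA_nonneg hP hW1 a')
    (Real.exp_nonneg _)) (T2v_nonneg (fun y' a'' b => pBgYA_nonneg hP hW1 hW2 y' a'' b) x y a'))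
    ⟨a, Finset.mem_univ a, by positivity⟩

/-- Main perturbation lemma: `ν ≤ 1` for any subnormalized `q` at the slot `a0`. -/
lemma nu_aux {P : X → Y → ℝ} {d1 : X → X1 → ℝ} {d2 : X → X2 → ℝ} {D1 D2 l1 l2 : ℝ}
    {W1 : X → Y → X1 → ℝ} {W2 : X → Y → X1 → X2 → ℝ}
    (hP : IsPMF2 P) (hd1 : ∀ x a, 0 ≤ d1 x a) (hd2 : ∀ x b, 0 ≤ d2 x b)
    (hdual : DualOpt P d1 d2 D1 D2 l1 l2) (hach : Achieves P d1 d2 D1 D2 W1 W2)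
    (b1 : X2) (a0 : X1) (q : Y → X2 → ℝ)
    (hq0 : ∀ y b, 0 ≤ q y b) (hqs : ∀ y, ∑ b, q y b ≤ 1) :
    ∑ x, ∑ y, P x y * (Real.exp (-(l1 * d1 x a0)) * (∑ b, q y b * Real.exp (-(l2 * d2 x b)))
      / SQ d1 d2 l1 l2 (pA P W1) (pBgYA P W1 W2) x y) ≤ 1 := by
  obtain ⟨hW1, hW2, hE1, hE2, hopt⟩ := hach
  obtain ⟨hl1, hl2, hrkdual⟩ := hdual
  obtain ⟨Ss, hSs⟩ : ∃ f : X → Y → ℝ, ∀ x y,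
      f x y = SQ d1 d2 l1 l2 (pA P W1) (pBgYA P W1 W2) x y := ⟨_, fun _ _ => rfl⟩
  obtain ⟨T, hT⟩ : ∃ f : X → Y → ℝ, ∀ x y,
      f x y = Real.exp (-(l1 * d1 x a0)) * (∑ b, q y b * Real.exp (-(l2 * d2 x b))) :=
    ⟨_, fun _ _ => rfl⟩
  obtain ⟨u, hu⟩ : ∃ f : X → Y → ℝ, ∀ x y, f x y = T x y / Ss x y - 1 := ⟨_, fun _ _ => rfl⟩
  simp only [← hT, ← hSs]
  have hT0 : ∀ x y, 0 ≤ T x y := fun x y => by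
    rw [hT]
    exact mul_nonneg (Real.exp_nonneg _)
      (Finset.sum_nonneg fun b _ => mul_nonneg (hq0 y b) (Real.exp_nonneg _))
  -- Step A: the logarithmic inequality for every small ε
  have stepA : ∀ ε : ℝ, 0 < ε → ε ≤ 1/2 →
      ∑ x, ∑ y, P x y * Real.log (1 + ε * u x y) ≤ 0 := by
    intro ε hε hε2
    have hε1 : (0:ℝ) < 1 - ε := by linarith
    set Q1e : X1 → ℝ := fun a => (1 - ε) * pA P W1 a + ε * (if a = a0 then 1 else 0) with hQ1e
    set Me : Y → X1 → X2 → ℝ := fun y a b =>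
      (1 - ε) * pA P W1 a * pBgYA P W1 W2 y a b + ε * (if a = a0 then q y b else 0) with hMe
    set Q2e : Y → X1 → X2 → ℝ := fun y a b =>
      if (∑ b', Me y a b') = 0 then (if b = b1 then 1 else 0) else Me y a b / Q1e a with hQ2e
    have hQ1e0 : ∀ a, 0 ≤ Q1e a := by
      intro a
      refine add_nonneg (mul_nonneg hε1.le (pA_nonneg hP hW1 a)) (mul_nonneg hε.le ?_)
      split <;> norm_num
    have hQ1es : ∑ a, Q1e a = 1 := by
      simp only [hQ1e]
      rw [Finset.sum_add_distrib, ← Finset.mul_sum, ← Finset.mul_sum, pA_sum hP hW1]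
      have : ∑ a : X1, (if a = a0 then (1:ℝ) else 0) = 1 := by simp
      rw [this]
      ring
    have hMe0 : ∀ y a b, 0 ≤ Me y a b := by
      intro y a b
      refine add_nonneg (mul_nonneg (mul_nonneg hε1.le (pA_nonneg hP hW1 a))
        (pBgYA_nonneg hP hW1 hW2 y a b)) (mul_nonneg hε.le ?_)
      split
      · exact hq0 y b
      · exact le_refl 0
    have hMrow : ∀ y a, ∑ b, Me y a b ≤ Q1e a := by
      intro y a
      simp only [hMe, hQ1e]
      rw [Finset.sum_add_distrib]
      have h1 : ∑ b, (1 - ε) * pA P W1 a * pBgYA P W1 W2 y a b ≤ (1 - ε) * pA P W1 a := by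
        rw [← Finset.mul_sum]
        calc (1 - ε) * pA P W1 a * ∑ b, pBgYA P W1 W2 y a b
            ≤ (1 - ε) * pA P W1 a * 1 := by
              refine mul_le_mul_of_nonneg_left (pBgYA_sum_le_one hP hW1 hW2 y a) ?_
              exact mul_nonneg hε1.le (pA_nonneg hP hW1 a)
          _ = (1 - ε) * pA P W1 a := mul_one _
      have h2 : ∑ b, ε * (if a = a0 then q y b else 0) ≤ ε * (if a = a0 then 1 else 0) := by
        by_cases ha : a = a0
        · simp only [ha, if_true]
          rw [← Finset.mul_sum]
          exact mul_le_mul_of_nonneg_left (hqs y) hε.le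
        · simp [ha]
      linarith
    have hQ1epos : ∀ y a, (∑ b, Me y a b) ≠ 0 → 0 < Q1e a := by
      intro y a hM
      have hMpos : 0 < ∑ b, Me y a b :=
        lt_of_le_of_ne (Finset.sum_nonneg fun b _ => hMe0 y a b) (Ne.symm hM)
      exact lt_of_lt_of_le hMpos (hMrow y a)
    have hQ2e0 : ∀ y a b, 0 ≤ Q2e y a b := by
      intro y a b
      simp only [hQ2e]
      split
      · split <;> norm_num
      · next h => exact div_nonneg (hMe0 y a b) (hQ1epos y a h).le
    have hQ2es : ∀ y a, ∑ b, Q2e y a b ≤ 1 := by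
      intro y a
      by_cases hM : (∑ b', Me y a b') = 0
      · simp [hQ2e, hM]
      · simp only [hQ2e, if_neg hM]
        rw [← Finset.sum_div]
        rw [div_le_one (hQ1epos y a hM)]
        exact hMrow y a
    have hT2e : ∀ x y a, 0 < T2v d2 l2 Q2e x y a := by
      intro x y a
      by_cases hM : (∑ b', Me y a b') = 0
      · refine Finset.sum_pos' (fun b _ => mul_nonneg (hQ2e0 y a b) (Real.exp_nonneg _))
          ⟨b1, Finset.mem_univ b1, ?_⟩
        have : Q2e y a b1 = 1 := by simp [hQ2e, hM]
        rw [this, one_mul]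
        exact Real.exp_pos _
      · obtain ⟨b, -, hb⟩ := Finset.exists_ne_zero_of_sum_ne_zero hM
        have hbpos : 0 < Me y a b := lt_of_le_of_ne (hMe0 y a b) (Ne.symm hb)
        refine Finset.sum_pos' (fun b' _ => mul_nonneg (hQ2e0 y a b') (Real.exp_nonneg _))
          ⟨b, Finset.mem_univ b, ?_⟩
        have : Q2e y a b = Me y a b / Q1e a := by simp [hQ2e, hM]
        rw [this]
        have := hQ1epos y a hM
        positivity
    -- lower bound for the perturbed S
    have hSe_ge : ∀ x y, (1 - ε) * Ss x y + ε * T x y ≤ SQ d1 d2 l1 l2 Q1e Q2e x y := by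
      intro x y
      have key : ∀ a, Real.exp (-(l1 * d1 x a)) * (∑ b, Me y a b * Real.exp (-(l2 * d2 x b)))
          ≤ Q1e a * Real.exp (-(l1 * d1 x a)) * T2v d2 l2 Q2e x y a := by
        intro a
        by_cases hM : (∑ b', Me y a b') = 0
        · have hz : ∀ b, Me y a b = 0 := by
            intro b
            have := (Finset.sum_eq_zero_iff_of_nonneg (fun b _ => hMe0 y a b)).1 hM
            exact this b (Finset.mem_univ b)
          have : ∑ b, Me y a b * Real.exp (-(l2 * d2 x b)) = 0 :=
            Finset.sum_eq_zero fun b _ => by rw [hz b, zero_mul]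
          rw [this, mul_zero]
          have := hT2e x y a
          have := hQ1e0 a
          positivity
        · have hQpos := hQ1epos y a hM
          have hterm : ∀ b, Q2e y a b * Real.exp (-(l2 * d2 x b))
              = Me y a b * Real.exp (-(l2 * d2 x b)) / Q1e a := by
            intro b
            have : Q2e y a b = Me y a b / Q1e a := by simp [hQ2e, hM]
            rw [this, div_mul_eq_mul_div]
          have hT2eq : T2v d2 l2 Q2e x y a
              = (∑ b, Me y a b * Real.exp (-(l2 * d2 x b))) / Q1e a := by
            unfold T2v
            rw [Finset.sum_congr rfl fun b _ => hterm b, ← Finset.sum_div]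
          rw [hT2eq]
          have : Q1e a * Real.exp (-(l1 * d1 x a))
              * ((∑ b, Me y a b * Real.exp (-(l2 * d2 x b))) / Q1e a)
              = Real.exp (-(l1 * d1 x a)) * (∑ b, Me y a b * Real.exp (-(l2 * d2 x b))) := by
            field_simp
          rw [this]
      have hsum : ∑ a, Real.exp (-(l1 * d1 x a)) * (∑ b, Me y a b * Real.exp (-(l2 * d2 x b)))
          = (1 - ε) * Ss x y + ε * T x y := by
        have inner : ∀ a, ∑ b, Me y a b * Real.exp (-(l2 * d2 x b))
            = (1 - ε) * (pA P W1 a * T2v d2 l2 (pBgYA P W1 W2) x y a)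
              + ε * (if a = a0 then (∑ b, q y b * Real.exp (-(l2 * d2 x b))) else 0) := by
          intro a
          simp only [hMe, add_mul, Finset.sum_add_distrib]
          congr 1
          · unfold T2v
            rw [Finset.mul_sum, Finset.mul_sum]
            exact Finset.sum_congr rfl fun b _ => by ring
          · by_cases ha : a = a0
            · simp only [ha, if_true]
              rw [Finset.mul_sum]
              exact Finset.sum_congr rfl fun b _ => by ring
            · simp [ha]
        rw [Finset.sum_congr rfl fun a _ => congrArg (fun z => Real.exp (-(l1 * d1 x a)) * z)
          (inner a)]
        have expand : ∀ a, Real.exp (-(l1 * d1 x a)) *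
            ((1 - ε) * (pA P W1 a * T2v d2 l2 (pBgYA P W1 W2) x y a)
              + ε * (if a = a0 then (∑ b, q y b * Real.exp (-(l2 * d2 x b))) else 0))
            = (1 - ε) * (pA P W1 a * Real.exp (-(l1 * d1 x a)) * T2v d2 l2 (pBgYA P W1 W2) x y a)
              + ε * (if a = a0 then Real.exp (-(l1 * d1 x a0))
                  * (∑ b, q y b * Real.exp (-(l2 * d2 x b))) else 0) := by
          intro a
          by_cases ha : a = a0
          · subst ha
            simp only [if_true]
            ring
          · simp only [ha, if_false]
            ring
        rw [Finset.sum_congr rfl fun a _ => expand a, Finset.sum_add_distrib,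
          ← Finset.mul_sum, ← Finset.mul_sum]
        have hite : ∑ a, (if a = a0 then Real.exp (-(l1 * d1 x a0))
            * (∑ b, q y b * Real.exp (-(l2 * d2 x b))) else 0)
            = T x y := by
          rw [Finset.sum_ite_eq' Finset.univ a0, hT]
          simp
        rw [hite, hSs]
        rfl
      calc (1 - ε) * Ss x y + ε * T x y
          = ∑ a, Real.exp (-(l1 * d1 x a)) * (∑ b, Me y a b * Real.exp (-(l2 * d2 x b))) :=
            hsum.symm
        _ ≤ ∑ a, Q1e a * Real.exp (-(l1 * d1 x a)) * T2v d2 l2 Q2e x y a :=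
            Finset.sum_le_sum fun a _ => key a
        _ = SQ d1 d2 l1 l2 Q1e Q2e x y := rfl
    -- assemble step A
    have hup := RK_le_F hP hd1 hd2 ⟨hl1, hl2, hrkdual⟩ Q1e hQ1e0 hQ1es Q2e hQ2e0 hQ2es hT2e
    have hlo := F_le_RK hP hl1 hl2 ⟨hW1, hW2, hE1, hE2, hopt⟩ (d1 := d1) (d2 := d2)
      (l1 := l1) (l2 := l2) (D1 := D1) (D2 := D2)
    have hmono : ∑ x, ∑ y, P x y * Real.log ((1 - ε) * Ss x y + ε * T x y)
        ≤ ∑ x, ∑ y, P x y * Real.log (SQ d1 d2 l1 l2 Q1e Q2e x y) := by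
      refine Finset.sum_le_sum fun x _ => Finset.sum_le_sum fun y _ => ?_
      rcases eq_or_ne (P x y) 0 with h | h
      · rw [h, zero_mul, zero_mul]
      · refine mul_le_mul_of_nonneg_left ?_ (hP.1 x y)
        refine Real.log_le_log ?_ (hSe_ge x y)
        have hSpos : 0 < Ss x y := by
          rw [hSs]
          exact SQstar_pos hP hW1 hW2 (d1 := d1) (d2 := d2) (l1 := l1) (l2 := l2) h
        nlinarith [mul_nonneg hε.le (hT0 x y), mul_pos hε1 hSpos]
    have hcomb : ∑ x, ∑ y, P x y * Real.log ((1 - ε) * Ss x y + ε * T x y)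
        ≤ ∑ x, ∑ y, P x y * Real.log (Ss x y) := by
      have h1 : -(∑ x, ∑ y, P x y * Real.log (Ss x y)) - l1 * D1 - l2 * D2
          ≤ RK P d1 d2 D1 D2 := by
        simp only [hSs]
        exact hlo
      have h2 : RK P d1 d2 D1 D2 ≤
          -(∑ x, ∑ y, P x y * Real.log (SQ d1 d2 l1 l2 Q1e Q2e x y)) - l1 * D1 - l2 * D2 := hup
      linarith [hmono]
    have hfin : ∑ x, ∑ y, P x y * Real.log (1 + ε * u x y)
        = (∑ x, ∑ y, P x y * Real.log ((1 - ε) * Ss x y + ε * T x y))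
          - ∑ x, ∑ y, P x y * Real.log (Ss x y) := by
      rw [← Finset.sum_sub_distrib]
      simp only [← Finset.sum_sub_distrib]
      refine Finset.sum_congr rfl fun x _ => Finset.sum_congr rfl fun y _ => ?_
      rcases eq_or_ne (P x y) 0 with h | h
      · rw [h, zero_mul, zero_mul, zero_mul, sub_zero]
      · have hSpos : 0 < Ss x y := by
          rw [hSs]
          exact SQstar_pos hP hW1 hW2 (d1 := d1) (d2 := d2) (l1 := l1) (l2 := l2) h
        have harg : 1 + ε * u x y = ((1 - ε) * Ss x y + ε * T x y) / Ss x y := by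
          rw [hu]
          field_simp
          ring
        have hnum : 0 < (1 - ε) * Ss x y + ε * T x y := by
          nlinarith [mul_nonneg hε.le (hT0 x y), mul_pos hε1 hSpos]
        rw [harg, Real.log_div (ne_of_gt hnum) (ne_of_gt hSpos)]
        ring
    rw [hfin]
    linarith [hcomb]
  -- Step B: conclude via a quantitative first-order argument
  obtain ⟨A, hA⟩ : ∃ r : ℝ, r = ∑ x, ∑ y, P x y * u x y := ⟨_, rfl⟩
  obtain ⟨B, hB⟩ : ∃ r : ℝ, r = ∑ x, ∑ y, P x y * (u x y)^2 := ⟨_, rfl⟩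
  have hB0 : 0 ≤ B := by
    rw [hB]
    exact Finset.sum_nonneg fun x _ => Finset.sum_nonneg fun y _ =>
      mul_nonneg (hP.1 x y) (sq_nonneg _)
  have hgoalA : ∑ x, ∑ y, P x y * (T x y / Ss x y) = A + 1 := by
    have : ∀ x y, P x y * (T x y / Ss x y) = P x y * u x y + P x y := by
      intro x y
      rw [hu]
      ring
    rw [Finset.sum_congr rfl fun x _ => Finset.sum_congr rfl fun y _ => this x y]
    simp only [Finset.sum_add_distrib]
    rw [hP.2, hA]
  rw [hgoalA]
  by_contra hcon
  push_neg at hcon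
  have hApos : 0 < A := by linarith
  obtain ⟨ε, hεdef⟩ : ∃ e : ℝ, e = min (1/2) (A / (2*B + 1)) := ⟨_, rfl⟩
  have hden : (0:ℝ) < 2*B + 1 := by linarith
  have hε : 0 < ε := hεdef ▸ lt_min (by norm_num) (div_pos hApos hden)
  have hε2 : ε ≤ 1/2 := hεdef ▸ min_le_left _ _
  have hεA : ε ≤ A / (2*B + 1) := hεdef ▸ min_le_right _ _
  have hlog := stepA ε hε hε2
  have hlb : ∑ x, ∑ y, P x y * (ε * u x y - 2*ε^2 * (u x y)^2)
      ≤ ∑ x, ∑ y, P x y * Real.log (1 + ε * u x y) := by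
    refine Finset.sum_le_sum fun x _ => Finset.sum_le_sum fun y _ => ?_
    rcases eq_or_ne (P x y) 0 with h | h
    · rw [h, zero_mul, zero_mul]
    · refine mul_le_mul_of_nonneg_left ?_ (hP.1 x y)
      have hSpos : 0 < Ss x y := by
        rw [hSs]
        exact SQstar_pos hP hW1 hW2 (d1 := d1) (d2 := d2) (l1 := l1) (l2 := l2) h
      have hu1 : -1 ≤ u x y := by
        have : 0 ≤ T x y / Ss x y := div_nonneg (hT0 x y) hSpos.le
        rw [hu]
        linarith
      have ht : -(1:ℝ)/2 ≤ ε * u x y := by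
        have h9 : 0 ≤ ε * (u x y + 1) := mul_nonneg hε.le (by linarith)
        nlinarith [h9, hε2]
      have := log_lb ht
      calc ε * u x y - 2*ε^2 * (u x y)^2
          = ε * u x y - 2*(ε * u x y)^2 := by ring
        _ ≤ Real.log (1 + ε * u x y) := this
  have hsum_lb : ∑ x, ∑ y, P x y * (ε * u x y - 2*ε^2 * (u x y)^2) = ε * A - 2*ε^2 * B := by
    rw [hA, hB]
    simp only [Finset.mul_sum]
    rw [← Finset.sum_sub_distrib]
    simp only [← Finset.sum_sub_distrib]
    refine Finset.sum_congr rfl fun x _ => Finset.sum_congr rfl fun y _ => by ring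
  rw [hsum_lb] at hlb
  have hcontr : ε * A - 2*ε^2 * B ≤ 0 := le_trans hlb hlog
  have hkey : A = A / (2*B + 1) * (2*B + 1) := (div_mul_cancel₀ A (ne_of_gt hden)).symm
  have hc : 0 < A / (2*B + 1) := div_pos hApos hden
  have hε2c : ε * ε ≤ ε * (A / (2*B + 1)) := mul_le_mul_of_nonneg_left hεA hε.le
  have h5 : ε * ε * B ≤ ε * (A / (2*B + 1)) * B := mul_le_mul_of_nonneg_right hε2c hB0
  have h6 : 0 < ε * (A / (2*B + 1)) := mul_pos hε hc
  have h7 : ε * A = ε * (A / (2*B + 1) * (2*B + 1)) := by rw [← hkey]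
  nlinarith [h5, h6, hcontr, h7]

end AuxProofs

/-- Lemma 2 of the paper: for a pair of test channels achieving
`R_K(P_{XY},D₁,D₂)`, the quantities `ν₁(x̂₁)` and `ν₂(x̂₁, Q_{X̂₂|YX̂₁})` are at most `1`. -/
theorem nu_le_one
    {X Y X1 X2 : Type*} [Fintype X] [Fintype Y] [Fintype X1] [Fintype X2]
    (P : X → Y → ℝ) (d1 : X → X1 → ℝ) (d2 : X → X2 → ℝ) (D1 D2 l1 l2 : ℝ)
    (hP : IsPMF2 P)
    (hd1 : ∀ x a, 0 ≤ d1 x a) (hd2 : ∀ x b, 0 ≤ d2 x b)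
    -- `λ₁*, λ₂*` are dual-optimal multipliers
    (hdual : DualOpt P d1 d2 D1 D2 l1 l2)
    -- a fixed pair of test channels achieving `R_K(P_{XY},D₁,D₂)`
    (W1 : X → Y → X1 → ℝ) (W2 : X → Y → X1 → X2 → ℝ)
    (hach : Achieves P d1 d2 D1 D2 W1 W2) :
    ∀ a : X1,
      -- ν₁(x̂₁) ≤ 1
      ((∑ x, ∑ y, P x y *
          (alpha d1 d2 l1 l2 (pA P W1) (pBgYA P W1 W2) x y /
            alpha2 d2 l2 (pBgYA P W1 W2) x y a) * Real.exp (-(l1 * d1 x a))) ≤ 1)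
      ∧
      -- ν₂(x̂₁, Q_{X̂₂|YX̂₁}) ≤ 1 for every conditional pmf Q_{X̂₂|YX̂₁}
      (∀ Q2 : Y → X1 → X2 → ℝ, (∀ y a', IsPMF (Q2 y a')) →
        (∑ x, ∑ y, ∑ b, P x y * Q2 y a b *
            alpha d1 d2 l1 l2 (pA P W1) (pBgYA P W1 W2) x y *
            Real.exp (-(l1 * d1 x a) - l2 * d2 x b)) ≤ 1) := by
  intro a
  have hXne : Nonempty X := by
    rcases isEmpty_or_nonempty X with h | h
    · have h2 := hP.2
      haveI := h
      simp at h2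
    · exact h
  have hYne : Nonempty Y := by
    rcases isEmpty_or_nonempty Y with h | h
    · have h2 := hP.2
      haveI := h
      simp at h2
    · exact h
  obtain ⟨x0⟩ := hXne
  obtain ⟨y0⟩ := hYne
  have hX2ne : Nonempty X2 := by
    rcases isEmpty_or_nonempty X2 with h | h
    · have h2 := (hach.2.1 x0 y0 a).2
      haveI := h
      simp at h2
    · exact h
  obtain ⟨b1⟩ := hX2ne
  constructor
  · have haux := nu_aux hP hd1 hd2 hdual hach b1 a (fun y b => pBgYA P W1 W2 y a b)
      (fun y b => pBgYA_nonneg hP hach.1 hach.2.1 y a b)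
      (fun y => pBgYA_sum_le_one hP hach.1 hach.2.1 y a)
    refine le_trans (le_of_eq ?_) haux
    refine Finset.sum_congr rfl fun x _ => Finset.sum_congr rfl fun y _ => ?_
    rw [alpha_eq, alpha2_eq, div_inv_eq_mul, div_eq_mul_inv]
    unfold T2v
    ring
  · intro Q2 hQ2
    have haux := nu_aux hP hd1 hd2 hdual hach b1 a (fun y b => Q2 y a b)
      (fun y b => (hQ2 y a).1 b) (fun y => (hQ2 y a).2.le)
    refine le_trans (le_of_eq ?_) haux
    refine Finset.sum_congr rfl fun x _ => Finset.sum_congr rfl fun y _ => ?_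
    simp only [alpha_eq]
    have hterm : ∀ b, P x y * Q2 y a b * (SQ d1 d2 l1 l2 (pA P W1) (pBgYA P W1 W2) x y)⁻¹
        * Real.exp (-(l1 * d1 x a) - l2 * d2 x b)
        = (P x y * (Real.exp (-(l1 * d1 x a))
            * (SQ d1 d2 l1 l2 (pA P W1) (pBgYA P W1 W2) x y)⁻¹))
          * (Q2 y a b * Real.exp (-(l2 * d2 x b))) := by
      intro b
      rw [show -(l1 * d1 x a) - l2 * d2 x b = -(l1 * d1 x a) + -(l2 * d2 x b) from by ring,
        Real.exp_add]
      ring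
    rw [Finset.sum_congr rfl fun b _ => hterm b, ← Finset.mul_sum, div_eq_mul_inv]
    ring

end Kaspi
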